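/- Let T be an ergodic measure preserving transformation of a σ-finite standard measure space (X,μ) with orbit equivalence relation R, K a compact abelian group with a continuous automorphism v, α: R → K a cocycle, and S an invertible measure preserving transformation commuting with T. If the cocycle α∘S (defined by (α∘S)(x,y) = α(Sx,Sy)) is cohomologous to v∘α, then for every character χ of K and every i ∈ ℤ, the weighted Koopman operators U_{T,χ} and U_{T, χ∘v^i} are unitarily equivalent, where U_{T,χ}f(x) = χ(α(Tx,x)) f(Tx) on L²(X,μ). -/

import Mathlib

open MeasureTheory
open scoped ENNReal

noncomputable instance : MeasurableSpace Circle := borel Circle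
instance : BorelSpace Circle := ⟨rfl⟩

/-- The underlying (a.e. defined) function of an element of `L²`. -/
noncomputable def lpFun {α : Type*} [MeasurableSpace α] {μ : MeasureTheory.Measure α}
    (f : MeasureTheory.Lp ℂ 2 μ) : α → ℂ := ↑↑f

section Aux

variable {X : Type*} [MeasurableSpace X] {μ : Measure X}

private lemma aux_memLp (e : X ≃ᵐ X) (he : MeasurePreserving e μ μ) (w : X → Circle)
    (hw : Measurable fun x => (w x : ℂ)) (f : Lp ℂ 2 μ) :
    MemLp (fun x => (w x : ℂ) * lpFun f (e x)) 2 μ := by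
  have hc : MemLp (fun x => lpFun f (e x)) 2 μ :=
    (Lp.memLp f).comp_measurePreserving he
  refine ⟨hw.aestronglyMeasurable.mul hc.1, ?_⟩
  have hnorm : eLpNorm (fun x => (w x : ℂ) * lpFun f (e x)) 2 μ
      = eLpNorm (fun x => lpFun f (e x)) 2 μ := by
    refine eLpNorm_congr_norm_ae (Filter.Eventually.of_forall fun x => ?_)
    rw [norm_mul]
    simp [Circle.norm_coe]
  rw [hnorm]
  exact hc.2

private lemma aux_coeFn_comp (e : X ≃ᵐ X) (he : MeasurePreserving e μ μ)
    {g g' : X → ℂ} (h : g =ᵐ[μ] g') :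
    (fun x => g (e x)) =ᵐ[μ] fun x => g' (e x) :=
  he.quasiMeasurePreserving.ae_eq_comp h

/-- The weighted composition operator by a unimodular weight and a measure
preserving automorphism, as a linear isometry equivalence of `L²`. -/
private lemma exists_weighted_comp_equiv (e : X ≃ᵐ X) (he : MeasurePreserving e μ μ)
    (w : X → Circle) (hw : Measurable fun x => (w x : ℂ)) :
    ∃ E : Lp ℂ 2 μ ≃ₗᵢ[ℂ] Lp ℂ 2 μ,
      ∀ f, lpFun (E f) =ᵐ[μ] fun x => (w x : ℂ) * lpFun f (e x) := by
  have he' : MeasurePreserving (⇑e.symm) μ μ := MeasurePreserving.symm e he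
  set w' : X → Circle := fun x => (w (e.symm x))⁻¹ with hw'def
  have hw' : Measurable fun x => (w' x : ℂ) := by
    simp only [hw'def, Circle.coe_inv]
    exact (hw.comp e.symm.measurable).inv
  set Φ : Lp ℂ 2 μ → Lp ℂ 2 μ := fun f => (aux_memLp e he w hw f).toLp _ with hΦdef
  set Ψ : Lp ℂ 2 μ → Lp ℂ 2 μ := fun f => (aux_memLp e.symm he' w' hw' f).toLp _ with hΨdef
  have hΦ : ∀ f, lpFun (Φ f) =ᵐ[μ] fun x => (w x : ℂ) * lpFun f (e x) := fun f =>
    MemLp.coeFn_toLp _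
  have hΨ : ∀ f, lpFun (Ψ f) =ᵐ[μ] fun x => (w' x : ℂ) * lpFun f (e.symm x) := fun f =>
    MemLp.coeFn_toLp _
  have hleft : ∀ f, Ψ (Φ f) = f := by
    intro f
    refine Lp.ext ?_
    filter_upwards [hΨ (Φ f), aux_coeFn_comp e.symm he' (hΦ f)] with x h1 h2
    show lpFun (Ψ (Φ f)) x = lpFun f x
    rw [h1, h2, MeasurableEquiv.apply_symm_apply]
    simp only [hw'def, Circle.coe_inv]
    exact inv_mul_cancel_left₀ (Circle.coe_ne_zero _) _
  have hright : ∀ f, Φ (Ψ f) = f := by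
    intro f
    refine Lp.ext ?_
    filter_upwards [hΦ (Ψ f), aux_coeFn_comp e he (hΨ f)] with x h1 h2
    show lpFun (Φ (Ψ f)) x = lpFun f x
    rw [h1, h2]
    simp only [hw'def, Circle.coe_inv, MeasurableEquiv.symm_apply_apply]
    exact mul_inv_cancel_left₀ (Circle.coe_ne_zero _) _
  have hadd : ∀ f g, Φ (f + g) = Φ f + Φ g := by
    intro f g
    refine Lp.ext ?_
    filter_upwards [hΦ (f + g), hΦ f, hΦ g, Lp.coeFn_add (Φ f) (Φ g),
      aux_coeFn_comp e he (Lp.coeFn_add f g)] with x h1 h2 h3 h4 h5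
    simp only [lpFun] at h1 h2 h3 h5 ⊢
    rw [h1, h4, Pi.add_apply, h5, Pi.add_apply, h2, h3]; ring
  have hsmul : ∀ (c : ℂ) (f : Lp ℂ 2 μ), Φ (c • f) = c • Φ f := by
    intro c f
    refine Lp.ext ?_
    filter_upwards [hΦ (c • f), hΦ f, Lp.coeFn_smul c (Φ f),
      aux_coeFn_comp e he (Lp.coeFn_smul c f)] with x h1 h2 h3 h4
    simp only [lpFun] at h1 h2 h4 ⊢
    rw [h1, h3, Pi.smul_apply, h4, Pi.smul_apply, h2, smul_eq_mul, smul_eq_mul]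
    ring
  have hnorm : ∀ f, ‖Φ f‖ = ‖f‖ := by
    intro f
    rw [hΦdef]
    rw [Lp.norm_toLp]
    have h1 : eLpNorm (fun x => (w x : ℂ) * lpFun f (e x)) 2 μ
        = eLpNorm ((↑↑f : X → ℂ) ∘ ⇑e) 2 μ := by
      refine eLpNorm_congr_norm_ae (Filter.Eventually.of_forall fun x => ?_)
      rw [norm_mul]
      simp [Circle.norm_coe, Function.comp, lpFun]
    rw [h1, eLpNorm_comp_measurePreserving (Lp.aestronglyMeasurable f) he, Lp.norm_def]
  let L : Lp ℂ 2 μ ≃ₗ[ℂ] Lp ℂ 2 μ :=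
    { toFun := Φ, map_add' := hadd, map_smul' := fun c f => by simpa using hsmul c f,
      invFun := Ψ, left_inv := hleft, right_inv := hright }
  exact ⟨{ toLinearEquiv := L, norm_map' := hnorm }, hΦ⟩

end Aux

/-- Remark 2.3.  Let `T` be an ergodic measure preserving
transformation with orbit equivalence relation `R`, `K` a compact abelian group with
a continuous automorphism `v`, `α : R → K` a cocycle with values in `K`, and `S` a
measure preserving transformation commuting with `T`.  If `α∘S` is cohomologous to
`v∘α`, then for every character `χ` of `K` and every `i ∈ ℤ` the weighted Koopman
operators `U_{T,χ}` and `U_{T,χ∘v^i}` are unitarily equivalent. -/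
theorem weighted_koopman_unitarily_equivalent
    {X : Type*} [MeasurableSpace X] [StandardBorelSpace X]
    (μ : Measure X) [SigmaFinite μ]
    (T : X ≃ᵐ X) (hT : MeasurePreserving T μ μ) (herg : Ergodic T μ)
    {K : Type*} [AddCommGroup K] [TopologicalSpace K] [CompactSpace K]
    [IsTopologicalAddGroup K] [MeasurableSpace K] [BorelSpace K]
    (v : AddAut K) (hv : Continuous v) (hv' : Continuous v.symm)
    (α : X × X → K) (hα : Measurable α)
    -- `α` is a cocycle of the `T`-orbit equivalence relation `R`
    (hcoc : ∀ x y z : X, (∃ n : ℤ, (T.toEquiv ^ n) x = y) →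
      (∃ n : ℤ, (T.toEquiv ^ n) y = z) →
      α (x, y) + α (y, z) = α (x, z))
    (S : X ≃ᵐ X) (hS : MeasurePreserving S μ μ)
    (hST : ∀ x, S (T x) = T (S x))
    -- `α ∘ S` is cohomologous to `v ∘ α`
    (hcohom : ∃ φ : X → K, Measurable φ ∧ ∃ B : Set X, μ Bᶜ = 0 ∧
      ∀ x ∈ B, ∀ y ∈ B, (∃ n : ℤ, (T.toEquiv ^ n) x = y) →
        α (S x, S y) = φ x + v (α (x, y)) - φ y)
    (χ : AddChar K Circle) (hχ : Continuous χ) (i : ℤ) :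
    ∀ (U₁ U₂ : Lp ℂ 2 μ ≃ₗᵢ[ℂ] Lp ℂ 2 μ),
      (∀ f, lpFun (U₁ f) =ᵐ[μ]
        fun x => (χ (α (T x, x)) : ℂ) * lpFun f (T x)) →
      (∀ f, lpFun (U₂ f) =ᵐ[μ]
        fun x => (χ ((i • v) (α (T x, x))) : ℂ) * lpFun f (T x)) →
      ∃ e : Lp ℂ 2 μ ≃ₗᵢ[ℂ] Lp ℂ 2 μ, ∀ f, e (U₁ f) = U₂ (e f) := by
  intro U₁ U₂ h₁ h₂
  obtain ⟨φ, hφm, B, hBnull, hB⟩ := hcohom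
  -- `S` and `T` commute as permutations
  have hcomm : Commute S.toEquiv T.toEquiv := by
    refine Equiv.ext fun x => ?_
    simpa [Equiv.Perm.mul_apply] using hST x
  -- all integer powers of `S` are measure preserving
  have hpow : ∀ n : ℤ, MeasurePreserving (⇑(S.toEquiv ^ n)) μ μ := by
    intro n
    induction n using Int.induction_on with
    | zero => simpa using MeasurePreserving.id μ
    | succ k ih =>
      have h : (⇑(S.toEquiv ^ ((k : ℤ) + 1)) : X → X)
          = (⇑(S.toEquiv ^ (k : ℤ))) ∘ ⇑S := by
        funext z
        rw [zpow_add_one]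
        rfl
      rw [h]
      exact ih.comp hS
    | pred k ih =>
      have h : (⇑(S.toEquiv ^ (-(k : ℤ) - 1)) : X → X)
          = (⇑(S.toEquiv ^ (-(k : ℤ)))) ∘ ⇑S.symm := by
        funext z
        rw [zpow_sub_one]
        rfl
      rw [h]
      exact ih.comp (MeasurePreserving.symm S hS)
  -- powers of `S` preserve `T`-orbits
  have horb : ∀ (k : ℤ) (x y : X), (∃ n : ℤ, (T.toEquiv ^ n) x = y) →
      (∃ n : ℤ, (T.toEquiv ^ n) ((S.toEquiv ^ k) x) = (S.toEquiv ^ k) y) := by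
    rintro k x y ⟨n, rfl⟩
    refine ⟨n, ?_⟩
    have hc : (S.toEquiv ^ k) * (T.toEquiv ^ n) = (T.toEquiv ^ n) * (S.toEquiv ^ k) :=
      (hcomm.zpow_zpow k n)
    have := DFunLike.congr_fun hc x
    simpa [Equiv.Perm.mul_apply] using this.symm
  -- a full measure set invariant enough for all powers of `S`
  set B' : Set X := ⋂ n : ℤ, (⇑(S.toEquiv ^ n)) ⁻¹' B with hB'def
  have hB'null : μ B'ᶜ = 0 := by
    rw [hB'def, Set.compl_iInter]
    exact measure_iUnion_null fun n =>
      (hpow n).quasiMeasurePreserving.preimage_null hBnull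
  have hmem : ∀ (n : ℤ), ∀ x ∈ B', (S.toEquiv ^ n) x ∈ B := by
    intro n x hx
    exact Set.mem_iInter.1 hx n
  -- construct the transfer function `ψ` for the power `i`
  have hS1 : ∀ (m : ℤ) (z : X), (S.toEquiv ^ (m + 1)) z = S ((S.toEquiv ^ m) z) := by
    intro m z
    rw [show m + 1 = 1 + m by ring, zpow_one_add]
    rfl
  have hv1 : ∀ (m : ℤ) (a : K), ((m + 1) • v) a = v ((m • v) a) := by
    intro m a
    rw [show m + 1 = 1 + m by ring, add_zsmul, one_zsmul]
    rfl
  have hψex : ∀ j : ℤ, ∃ ψ : X → K,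
      (∀ χ' : AddChar K Circle, Continuous χ' →
        Measurable fun x => ((χ' (ψ x) : Circle) : ℂ)) ∧
      ∀ x ∈ B', ∀ y ∈ B', (∃ n : ℤ, (T.toEquiv ^ n) x = y) →
        α ((S.toEquiv ^ j) x, (S.toEquiv ^ j) y)
          = ψ x + (j • v) (α (x, y)) - ψ y := by
    intro j
    induction j using Int.induction_on with
    | zero =>
      refine ⟨fun _ => 0, fun χ' _ => by simp [measurable_const], fun x _ y _ _ => ?_⟩
      simp
    | succ k ih =>
      obtain ⟨ψ, hψm, hid⟩ := ih
      refine ⟨fun x => φ ((S.toEquiv ^ (k : ℤ)) x) + v (ψ x), ?_, fun x hx y hy hxy => ?_⟩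
      · intro χ' hχ'
        have hfac : (fun x => ((χ' (φ ((S.toEquiv ^ (k : ℤ)) x) + v (ψ x)) : Circle) : ℂ))
            = fun x => ((χ' (φ ((S.toEquiv ^ (k : ℤ)) x)) : Circle) : ℂ)
                * ((χ'.compAddMonoidHom (v : K ≃+ K).toAddMonoidHom (ψ x) : Circle) : ℂ) := by
          funext x
          rw [AddChar.map_add_eq_mul]
          push_cast
          rfl
        rw [hfac]
        have hm1 : Measurable fun x => ((χ' (φ ((S.toEquiv ^ (k : ℤ)) x)) : Circle) : ℂ) :=
          ((continuous_subtype_val.comp hχ').measurable.comp hφm).comp (hpow (k : ℤ)).measurable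
        have hm2 : Measurable fun x =>
            ((χ'.compAddMonoidHom (v : K ≃+ K).toAddMonoidHom (ψ x) : Circle) : ℂ) :=
          hψm (χ'.compAddMonoidHom (v : K ≃+ K).toAddMonoidHom) (hχ'.comp hv)
        exact hm1.mul hm2
      · have h1 := hB _ (hmem (k : ℤ) x hx) _ (hmem (k : ℤ) y hy) (horb (k : ℤ) x y hxy)
        have h2 := hid x hx y hy hxy
        rw [hS1, hS1, h1, h2, hv1]
        rw [map_sub, map_add]
        beta_reduce
        abel
    | pred k ih =>
      obtain ⟨ψ, hψm, hid⟩ := ih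
      refine ⟨fun x => v.symm (ψ x) - v.symm (φ ((S.toEquiv ^ (-(k : ℤ) - 1)) x)),
        ?_, fun x hx y hy hxy => ?_⟩
      · intro χ' hχ'
        have hfac : (fun x => ((χ' (v.symm (ψ x) - v.symm (φ ((S.toEquiv ^ (-(k : ℤ) - 1)) x)))
              : Circle) : ℂ))
            = fun x => ((χ'.compAddMonoidHom (v.symm : K ≃+ K).toAddMonoidHom (ψ x) : Circle) : ℂ)
                * (((χ' (v.symm (φ ((S.toEquiv ^ (-(k : ℤ) - 1)) x))) : Circle) : ℂ))⁻¹ := by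
          funext x
          rw [AddChar.map_sub_eq_div]
          push_cast
          rw [div_eq_mul_inv]
          rfl
        rw [hfac]
        have hm1 : Measurable fun x =>
            ((χ'.compAddMonoidHom (v.symm : K ≃+ K).toAddMonoidHom (ψ x) : Circle) : ℂ) :=
          hψm _ (hχ'.comp hv')
        have hm2 : Measurable fun x =>
            ((χ' (v.symm (φ ((S.toEquiv ^ (-(k : ℤ) - 1)) x))) : Circle) : ℂ) :=
          (((continuous_subtype_val.comp hχ').comp hv').measurable.comp hφm).comp
            (hpow (-(k : ℤ) - 1)).measurable
        exact hm1.mul hm2.inv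
      · have h1 := hB _ (hmem (-(k : ℤ) - 1) x hx) _ (hmem (-(k : ℤ) - 1) y hy)
          (horb (-(k : ℤ) - 1) x y hxy)
        have h2 := hid x hx y hy hxy
        have hS2 : ∀ z : X, S ((S.toEquiv ^ (-(k : ℤ) - 1)) z) = (S.toEquiv ^ (-(k : ℤ))) z := by
          intro z
          have h := hS1 (-(k : ℤ) - 1) z
          rw [show -(k : ℤ) - 1 + 1 = -(k : ℤ) by ring] at h
          exact h.symm
        have hv2 : ∀ a : K, v (((-(k : ℤ) - 1) • v) a) = ((-(k : ℤ)) • v) a := by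
          intro a
          have h := hv1 (-(k : ℤ) - 1) a
          rw [show -(k : ℤ) - 1 + 1 = -(k : ℤ) by ring] at h
          exact h.symm
        rw [hS2, hS2, h2] at h1
        have key : v (α ((S.toEquiv ^ (-(k : ℤ) - 1)) x, (S.toEquiv ^ (-(k : ℤ) - 1)) y))
            = (ψ x + ((-(k : ℤ)) • v) (α (x, y)) - ψ y)
              - φ ((S.toEquiv ^ (-(k : ℤ) - 1)) x) + φ ((S.toEquiv ^ (-(k : ℤ) - 1)) y) := by
          rw [h1]
          abel
        apply v.injective
        rw [key]
        simp only [map_sub, map_add, AddEquiv.apply_symm_apply, hv2]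
        abel
  obtain ⟨ψ, hψm, hψid⟩ := hψex i
  -- `S^i` as a measurable equivalence
  have hmeasinv : Measurable (⇑(S.toEquiv ^ i).symm : X → X) := by
    have h := (hpow (-i)).measurable
    rwa [zpow_neg, Equiv.Perm.inv_def] at h
  set Si : X ≃ᵐ X :=
    { toEquiv := S.toEquiv ^ i
      measurable_toFun := (hpow i).measurable
      measurable_invFun := hmeasinv } with hSidef
  have hSi : MeasurePreserving (⇑Si) μ μ := hpow i
  -- the weight
  have hwm : Measurable fun x => ((χ (ψ x) : Circle) : ℂ) := hψm χ hχ
  obtain ⟨E, hE⟩ := exists_weighted_comp_equiv Si hSi (fun x => χ (ψ x)) hwm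
  refine ⟨E, fun f => ?_⟩
  -- `T` commutes with `S^i`
  have hTSi : ∀ z : X, T (Si z) = Si (T z) := by
    intro z
    have hc : (S.toEquiv ^ i) * T.toEquiv = T.toEquiv * (S.toEquiv ^ i) :=
      (hcomm.zpow_left i)
    have := DFunLike.congr_fun hc z
    show T ((S.toEquiv ^ i) z) = (S.toEquiv ^ i) (T z)
    simpa [Equiv.Perm.mul_apply] using this.symm
  refine Lp.ext ?_
  have hae1 : ∀ᵐ x ∂μ, x ∈ B' := mem_ae_iff.2 (by simpa using hB'null)
  have hae2 : ∀ᵐ x ∂μ, T x ∈ B' := by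
    have h := hT.quasiMeasurePreserving.preimage_null hB'null
    exact mem_ae_iff.2 h
  filter_upwards [hE (U₁ f), aux_coeFn_comp Si hSi (h₁ f), h₂ (E f),
    hT.quasiMeasurePreserving.ae_eq_comp (hE f), hae1, hae2]
    with x hx1 hx2 hx3 hx4 hxB hTxB
  show lpFun (E (U₁ f)) x = lpFun (U₂ (E f)) x
  -- left hand side
  have hL : lpFun (E (U₁ f)) x
      = (χ (ψ x) : ℂ) * ((χ (α (T (Si x), Si x)) : ℂ) * lpFun f (T (Si x))) := by
    rw [hx1, hx2]
  -- right hand side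
  have hR : lpFun (U₂ (E f)) x
      = (χ ((i • v) (α (T x, x))) : ℂ) * ((χ (ψ (T x)) : ℂ) * lpFun f (Si (T x))) := by
    rw [hx3]
    have : lpFun (E f) (T x) = (χ (ψ (T x)) : ℂ) * lpFun f (Si (T x)) := hx4
    rw [this]
  rw [hL, hR, hTSi]
  -- the cocycle identity
  have horb1 : ∃ n : ℤ, (T.toEquiv ^ n) (T x) = x := by
    refine ⟨-1, ?_⟩
    simp [zpow_neg, zpow_one, Equiv.Perm.inv_def]
  have hcocid : α (Si (T x), Si x) = ψ (T x) + (i • v) (α (T x, x)) - ψ x :=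
    hψid (T x) hTxB x hxB horb1
  have hc : (χ (α (Si (T x), Si x)) : ℂ)
      = (χ (ψ (T x)) : ℂ) * (χ ((i • v) (α (T x, x))) : ℂ) * ((χ (ψ x) : ℂ))⁻¹ := by
    rw [hcocid, sub_eq_add_neg, AddChar.map_add_eq_mul, AddChar.map_add_eq_mul,
      AddChar.map_neg_eq_inv]
    push_cast
    ring
  rw [hc]
  have hne : (χ (ψ x) : ℂ) ≠ 0 := Circle.coe_ne_zero _
  field_simp
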